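/- arXiv:2404.03119 — 2 statements merged into one kernel-verified Lean document; each statement's English description precedes it below -/
import Mathlib

section
/- Let $U \in \mathbb{R}^{N_1 \times r}$ and $V \in \mathbb{R}^{N_2 \times r}$ have orthonormal columns, let $S \in \mathbb{R}^{r \times r}$, let $A_1 \in \mathbb{R}^{N_1 \times N_1}$, $A_2 \in \mathbb{R}^{N_2 \times N_2}$, $U_0 \in \mathbb{R}^{N_1 \times r_0}$, $S_0 \in \mathbb{R}^{r_0 \times r_0}$, $V_0 \in \mathbb{R}^{N_2 \times r_0}$, and suppose $U U^T U_0 = U_0$ and $V V^T V_0 = V_0$ (i.e., the columns of $U_0$ and $V_0$ lie in the column spaces of $U$ and $V$ respectively). Set $F = U S V^T$, $\tilde{B} = (U^T U_0) S_0 (V^T V_0)^T$, and $R = A_1 F + F A_2^T - U_0 S_0 V_0^T$. Then $R = [\,U,\ A_1 U\,] \begin{pmatrix} -\tilde{B} & S \\ S & 0 \end{pmatrix} [\,V,\ A_2 V\,]^T$, where $[\,U,\ A_1 U\,]$ denotes the horizontal concatenation of $U$ and $A_1 U$. -/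
open Matrix

/-- Factorized form of the Sylvester residual: if `U, V` have orthonormal columns and the
columns of `U0, V0` lie in the ranges of `U, V` respectively, then with `F = U S Vᵀ` and
`B̃ = (Uᵀ U0) S0 (Vᵀ V0)ᵀ`, the residual `R = A1 F + F A2ᵀ - U0 S0 V0ᵀ` factors as
`[U, A1 U] ⬝ [[-B̃, S], [S, 0]] ⬝ [V, A2 V]ᵀ`. -/
theorem residual_factorization (N1 N2 r r0 : ℕ)
    (U : Matrix (Fin N1) (Fin r) ℝ) (V : Matrix (Fin N2) (Fin r) ℝ)
    (hU : Uᵀ * U = 1) (hV : Vᵀ * V = 1)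
    (S : Matrix (Fin r) (Fin r) ℝ)
    (A1 : Matrix (Fin N1) (Fin N1) ℝ) (A2 : Matrix (Fin N2) (Fin N2) ℝ)
    (U0 : Matrix (Fin N1) (Fin r0) ℝ) (S0 : Matrix (Fin r0) (Fin r0) ℝ)
    (V0 : Matrix (Fin N2) (Fin r0) ℝ)
    (hU0 : U * Uᵀ * U0 = U0) (hV0 : V * Vᵀ * V0 = V0) :
    A1 * (U * S * Vᵀ) + (U * S * Vᵀ) * A2ᵀ - U0 * S0 * V0ᵀ
      = Matrix.fromCols U (A1 * U)
          * Matrix.fromBlocks (-((Uᵀ * U0) * S0 * (Vᵀ * V0)ᵀ)) S S 0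
          * (Matrix.fromCols V (A2 * V))ᵀ := by
  rw [Matrix.transpose_fromCols, Matrix.mul_assoc (Matrix.fromCols U (A1 * U)),
    Matrix.fromBlocks_mul_fromRows, Matrix.fromCols_mul_fromRows]
  have h : U * (Uᵀ * U0 * S0 * (Vᵀ * V0)ᵀ * Vᵀ) = U0 * S0 * V0ᵀ := by
    have hv' : V0ᵀ * (V * Vᵀ) = V0ᵀ := by
      have := congrArg Matrix.transpose hV0
      simpa [Matrix.transpose_mul, Matrix.mul_assoc] using this
    calc U * (Uᵀ * U0 * S0 * (Vᵀ * V0)ᵀ * Vᵀ)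
        = (U * Uᵀ * U0) * (S0 * (V0ᵀ * (V * Vᵀ))) := by
          simp only [Matrix.transpose_mul, Matrix.transpose_transpose, Matrix.mul_assoc]
      _ = U0 * S0 * V0ᵀ := by rw [hU0, hv', Matrix.mul_assoc]
  simp only [Matrix.mul_add, Matrix.add_mul, Matrix.mul_neg, Matrix.neg_mul,
    Matrix.mul_zero, Matrix.zero_mul, add_zero]
  have h2 : U * (S * (A2 * V)ᵀ) = U * S * Vᵀ * A2ᵀ := by
    simp only [Matrix.transpose_mul, Matrix.mul_assoc]
  have h3 : A1 * U * (S * Vᵀ) = A1 * (U * S * Vᵀ) := by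
    simp only [Matrix.mul_assoc]
  rw [h, h2, h3]
  abel
end

section
/- Let $U \in \mathbb{R}^{N_1 \times r}$ and $V \in \mathbb{R}^{N_2 \times r}$ have orthonormal columns, let $S \in \mathbb{R}^{r \times r}$, let $A_1 \in \mathbb{R}^{N_1 \times N_1}$, $A_2 \in \mathbb{R}^{N_2 \times N_2}$, $U_0 \in \mathbb{R}^{N_1 \times r_0}$, $S_0 \in \mathbb{R}^{r_0 \times r_0}$, $V_0 \in \mathbb{R}^{N_2 \times r_0}$, with $U U^T U_0 = U_0$ and $V V^T V_0 = V_0$. Suppose $[\,U,\ A_1 U\,] = Q_U R_U$ and $[\,V,\ A_2 V\,] = Q_V R_V$ where $Q_U$ and $Q_V$ have orthonormal columns and $R_U, R_V \in \mathbb{R}^{2r \times 2r}$. Then, with $F = U S V^T$ and $\tilde{B} = (U^T U_0) S_0 (V^T V_0)^T$, the residual satisfies $\| A_1 F + F A_2^T - U_0 S_0 V_0^T \|_F = \left\| R_U \begin{pmatrix} -\tilde{B} & S \\ S & 0 \end{pmatrix} R_V^T \right\|_F$. -/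
open Matrix
open scoped BigOperators

noncomputable def frob {m n : Type*} [Fintype m] [Fintype n] (M : Matrix m n ℝ) : ℝ :=
  Real.sqrt (∑ i, ∑ j, (M i j) ^ 2)

lemma frob_eq_trace {m n : Type*} [Fintype m] [Fintype n] (M : Matrix m n ℝ) :
    frob M = Real.sqrt ((Mᵀ * M).trace) := by
  unfold frob
  congr 1
  rw [Matrix.trace, Finset.sum_comm]
  simp [Matrix.diag, Matrix.mul_apply, sq]

lemma frob_conj {m n p q : Type*} [Fintype m] [Fintype n] [Fintype p] [Fintype q]
    [DecidableEq p] [DecidableEq q]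
    (Q : Matrix m p ℝ) (P : Matrix n q ℝ) (X : Matrix p q ℝ)
    (hQ : Qᵀ * Q = 1) (hP : Pᵀ * P = 1) :
    frob (Q * X * Pᵀ) = frob X := by
  rw [frob_eq_trace, frob_eq_trace]
  congr 1
  have h : (Q * X * Pᵀ)ᵀ * (Q * X * Pᵀ) = P * (Xᵀ * X) * Pᵀ := by
    simp only [Matrix.transpose_mul, Matrix.transpose_transpose, Matrix.mul_assoc]
    rw [← Matrix.mul_assoc Qᵀ Q, hQ, Matrix.one_mul]
  rw [h, Matrix.trace_mul_cycle, ← Matrix.mul_assoc, hP, Matrix.one_mul]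

/-- Efficient evaluation of the Sylvester residual norm: with QR factorizations
`[U, A1 U] = Q_U R_U` and `[V, A2 V] = Q_V R_V` (with orthonormal `Q_U, Q_V`),
the Frobenius norm of the residual `A1 F + F A2ᵀ - U0 S0 V0ᵀ` (for `F = U S Vᵀ`)
equals `‖R_U [[-B̃, S], [S, 0]] R_Vᵀ‖_F`. -/
theorem residual_norm_via_qr (N1 N2 r r0 : ℕ)
    (U : Matrix (Fin N1) (Fin r) ℝ) (V : Matrix (Fin N2) (Fin r) ℝ)
    (hU : Uᵀ * U = 1) (hV : Vᵀ * V = 1)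
    (S : Matrix (Fin r) (Fin r) ℝ)
    (A1 : Matrix (Fin N1) (Fin N1) ℝ) (A2 : Matrix (Fin N2) (Fin N2) ℝ)
    (U0 : Matrix (Fin N1) (Fin r0) ℝ) (S0 : Matrix (Fin r0) (Fin r0) ℝ)
    (V0 : Matrix (Fin N2) (Fin r0) ℝ)
    (hU0 : U * Uᵀ * U0 = U0) (hV0 : V * Vᵀ * V0 = V0)
    (QU : Matrix (Fin N1) (Fin r ⊕ Fin r) ℝ) (RU : Matrix (Fin r ⊕ Fin r) (Fin r ⊕ Fin r) ℝ)
    (QV : Matrix (Fin N2) (Fin r ⊕ Fin r) ℝ) (RV : Matrix (Fin r ⊕ Fin r) (Fin r ⊕ Fin r) ℝ)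
    (hQU : QUᵀ * QU = 1) (hQV : QVᵀ * QV = 1)
    (hQRU : Matrix.fromCols U (A1 * U) = QU * RU)
    (hQRV : Matrix.fromCols V (A2 * V) = QV * RV) :
    frob (A1 * (U * S * Vᵀ) + (U * S * Vᵀ) * A2ᵀ - U0 * S0 * V0ᵀ)
      = frob (RU * Matrix.fromBlocks (-((Uᵀ * U0) * S0 * (Vᵀ * V0)ᵀ)) S S 0 * RVᵀ) := by
  set B := Matrix.fromBlocks (-((Uᵀ * U0) * S0 * (Vᵀ * V0)ᵀ)) S S (0 : Matrix (Fin r) (Fin r) ℝ)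
    with hBdef
  have hV0' : V0ᵀ * (V * Vᵀ) = V0ᵀ := by
    have := congrArg Matrix.transpose hV0
    simpa [Matrix.transpose_mul, Matrix.mul_assoc] using this
  have hB : U * (Uᵀ * (U0 * (S0 * (V0ᵀ * (V * Vᵀ))))) = U0 * (S0 * V0ᵀ) := by
    rw [hV0']
    calc U * (Uᵀ * (U0 * (S0 * V0ᵀ))) = (U * Uᵀ * U0) * (S0 * V0ᵀ) := by
          simp [Matrix.mul_assoc]
      _ = U0 * (S0 * V0ᵀ) := by rw [hU0]
  have key : A1 * (U * S * Vᵀ) + (U * S * Vᵀ) * A2ᵀ - U0 * S0 * V0ᵀ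
      = QU * (RU * B * RVᵀ) * QVᵀ := by
    have h1 : QU * (RU * B * RVᵀ) * QVᵀ
        = (Matrix.fromCols U (A1 * U)) * B * (Matrix.fromCols V (A2 * V))ᵀ := by
      rw [hQRU, hQRV]
      simp only [Matrix.transpose_mul, Matrix.mul_assoc]
    rw [h1, Matrix.transpose_fromCols, hBdef, Matrix.fromCols_mul_fromBlocks,
      Matrix.fromCols_mul_fromRows]
    simp only [Matrix.transpose_mul, Matrix.transpose_transpose, Matrix.mul_zero, add_zero,
      Matrix.neg_mul, Matrix.mul_neg, Matrix.add_mul, Matrix.mul_assoc, hB]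
    abel
  rw [key, frob_conj _ _ _ hQU hQV]
end
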